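/- Under the hypotheses of the previous setting (asymptotically regular family, irreducible skeleton chain), the limit μ(i) = lim_{ε↓0} μ(i,ε) exists in [0,1] for each state i, and ∑_{i∈S} μ(i) = 1. -/

import Mathlib

open Filter Topology Finset

lemma statPow {N : ℕ} (P : Matrix (Fin N) (Fin N) ℝ) (v : Fin N → ℝ)
    (hv : ∀ j, ∑ i, v i * P i j = v j) :
    ∀ (n : ℕ) (j : Fin N), ∑ i, v i * (P ^ n) i j = v j := by
  intro n
  induction n with
  | zero =>
    intro j
    simp [Matrix.one_apply, mul_ite, Finset.sum_ite_eq]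
  | succ n ih =>
    intro j
    have hps : (P ^ (n+1)) = (P ^ n) * P := pow_succ P n
    simp only [hps, Matrix.mul_apply]
    calc ∑ i, v i * ∑ k, (P ^ n) i k * P k j
        = ∑ k, (∑ i, v i * (P ^ n) i k) * P k j := by
          simp_rw [Finset.mul_sum, Finset.sum_mul]
          rw [Finset.sum_comm]
          simp_rw [mul_assoc]
      _ = ∑ k, v k * P k j := by simp_rw [ih]
      _ = v j := hv j

lemma powNonneg {N : ℕ} (P : Matrix (Fin N) (Fin N) ℝ) (hPnn : ∀ i j, 0 ≤ P i j) :
    ∀ (n : ℕ) (i j : Fin N), 0 ≤ (P ^ n) i j := by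
  intro n
  induction n with
  | zero => intro i j; simp [Matrix.one_apply]; split <;> norm_num
  | succ n ih =>
    intro i j
    rw [pow_succ, Matrix.mul_apply]
    exact Finset.sum_nonneg fun k _ => mul_nonneg (ih i k) (hPnn k j)

lemma posOfStat {N : ℕ} (P : Matrix (Fin N) (Fin N) ℝ) (hPnn : ∀ i j, 0 ≤ P i j)
    (hirr : ∀ i j : Fin N, ∃ n : ℕ, 0 < (P ^ n) i j)
    (v : Fin N → ℝ) (hvnn : ∀ i, 0 ≤ v i) (hv1 : ∑ i, v i = 1)
    (hvs : ∀ j, ∑ i, v i * P i j = v j) : ∀ j, 0 < v j := by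
  obtain ⟨i0, hi0⟩ : ∃ i, 0 < v i := by
    by_contra h
    push_neg at h
    have : ∀ i ∈ (univ : Finset (Fin N)), v i = 0 := fun i _ => le_antisymm (h i) (hvnn i)
    rw [Finset.sum_congr rfl this] at hv1
    simp at hv1
  intro j
  obtain ⟨n, hn⟩ := hirr i0 j
  have hsum := statPow P v hvs n j
  have hle : v i0 * (P ^ n) i0 j ≤ ∑ i, v i * (P ^ n) i j :=
    Finset.single_le_sum (fun i _ => mul_nonneg (hvnn i) (powNonneg P hPnn n i j))
      (Finset.mem_univ i0)
  calc (0:ℝ) < v i0 * (P ^ n) i0 j := mul_pos hi0 hn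
    _ ≤ _ := hle
    _ = v j := hsum

lemma uniqueStat {N : ℕ} (P : Matrix (Fin N) (Fin N) ℝ) (hPnn : ∀ i j, 0 ≤ P i j)
    (hirr : ∀ i j : Fin N, ∃ n : ℕ, 0 < (P ^ n) i j)
    (lam x : Fin N → ℝ) (hlnn : ∀ i, 0 ≤ lam i) (hl1 : ∑ i, lam i = 1)
    (hls : ∀ j, ∑ i, lam i * P i j = lam j)
    (hxnn : ∀ i, 0 ≤ x i) (hx1 : ∑ i, x i = 1)
    (hxs : ∀ j, ∑ i, x i * P i j = x j) : x = lam := by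
  have hlp : ∀ j, 0 < lam j := posOfStat P hPnn hirr lam hlnn hl1 hls
  have hne : (univ : Finset (Fin N)).Nonempty := by
    rcases (univ : Finset (Fin N)).eq_empty_or_nonempty with h | h
    · rw [h] at hx1; simp at hx1
    · exact h
  obtain ⟨i0, -, hi0⟩ := Finset.exists_min_image univ (fun i => x i / lam i) hne
  set c := x i0 / lam i0 with hc
  set y : Fin N → ℝ := fun i => x i - c * lam i with hy
  have hynn : ∀ i, 0 ≤ y i := by
    intro i
    have := hi0 i (Finset.mem_univ i)
    have h2 : c * lam i ≤ x i := by
      rw [← le_div_iff₀ (hlp i)]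
      exact this
    simp [hy]; linarith
  have hys : ∀ j, ∑ i, y i * P i j = y j := by
    intro j
    simp only [hy, sub_mul, Finset.sum_sub_distrib, hxs j]
    congr 1
    rw [← hls j, Finset.mul_sum]
    congr 1; ext i; ring
  have hy0 : y i0 = 0 := by
    simp [hy, hc, div_mul_cancel₀ _ (hlp i0).ne']
  have hyz : ∀ i, y i = 0 := by
    intro i
    obtain ⟨n, hn⟩ := hirr i i0
    have hsum := statPow P y hys n i0
    rw [hy0] at hsum
    have hterm := (Finset.sum_eq_zero_iff_of_nonneg
      (fun k _ => mul_nonneg (hynn k) (powNonneg P hPnn n k i0))).1 hsum i (Finset.mem_univ i)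
    exact (mul_eq_zero.1 hterm).resolve_right hn.ne'
  have hxc : ∀ i, x i = c * lam i := by
    intro i; have := hyz i; simp [hy] at this; linarith
  have hc1 : c = 1 := by
    have : ∑ i, x i = c * ∑ i, lam i := by
      rw [Finset.mul_sum]; exact Finset.sum_congr rfl fun i _ => hxc i
    rw [hx1, hl1, mul_one] at this
    exact this.symm
  funext i
  rw [hxc i, hc1, one_mul]

/-- For an asymptotically regular family of continuous-time Markov chains whose skeleton
chain is irreducible, the limits `μ(i) = lim_{ε↓0} μ(i,ε)` of the stationary
distributions exist in `[0,1]` and sum to `1`. -/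
theorem stmt8 (N : ℕ) (hN : 2 ≤ N) (q : ℝ → Fin N → Fin N → ℝ)
    (hpos : ∀ ε > (0:ℝ), ∀ i j, i ≠ j → 0 < q ε i j)
    (hAR : ∀ i j k l : Fin N, i ≠ j → k ≠ l → ∃ L : ENNReal,
      Tendsto (fun ε => ENNReal.ofReal (q ε i j / q ε k l)) (𝓝[>] (0:ℝ)) (𝓝 L))
    (P : Matrix (Fin N) (Fin N) ℝ) (hPdiag : ∀ i, P i i = 0)
    (hP : ∀ i j : Fin N, i ≠ j → Tendsto
      (fun ε => q ε i j / ∑ j' ∈ Finset.univ.erase i, q ε i j')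
      (𝓝[>] (0:ℝ)) (𝓝 (P i j)))
    (hirr : ∀ i j : Fin N, ∃ n : ℕ, 0 < (P ^ n) i j)
    (lam : Fin N → ℝ)
    (hlamnn : ∀ i, 0 ≤ lam i) (hlam1 : ∑ i, lam i = 1)
    (hlamstat : ∀ j, ∑ i, lam i * P i j = lam j)
    (μ : ℝ → Fin N → ℝ)
    (hμ : ∀ ε > (0:ℝ), (∀ i, 0 ≤ μ ε i) ∧ (∑ i, μ ε i = 1) ∧
      ∀ j, ∑ i ∈ Finset.univ.erase j, μ ε i * q ε i j
        = μ ε j * ∑ k ∈ Finset.univ.erase j, q ε j k) :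
    ∃ μ₀ : Fin N → ℝ,
      (∀ i, μ₀ i ∈ Set.Icc (0:ℝ) 1 ∧
        Tendsto (fun ε => μ ε i) (𝓝[>] (0:ℝ)) (𝓝 (μ₀ i))) ∧
      ∑ i, μ₀ i = 1 := by
  have hevpos : ∀ᶠ ε in 𝓝[>] (0:ℝ), 0 < ε := eventually_mem_nhdsWithin
  -- row sums
  set Sr : ℝ → Fin N → ℝ := fun ε i => ∑ k ∈ Finset.univ.erase i, q ε i k with hSr
  have hSpos : ∀ ε > (0:ℝ), ∀ i, 0 < Sr ε i := by
    intro ε hε i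
    obtain ⟨j, hj⟩ := Fintype.exists_ne_of_one_lt_card (by rw [Fintype.card_fin]; omega) i
    exact Finset.sum_pos' (fun k hk => (hpos ε hε i k (Finset.ne_of_mem_erase hk).symm).le)
      ⟨j, Finset.mem_erase.2 ⟨hj, Finset.mem_univ j⟩,
        hpos ε hε i j (Ne.symm hj)⟩
  -- normalization constant
  set C : ℝ → ℝ := fun ε => ∑ k, μ ε k * Sr ε k with hCdef
  have hCpos : ∀ ε > (0:ℝ), 0 < C ε := by
    intro ε hε
    obtain ⟨hμnn, hμ1, -⟩ := hμ ε hε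
    obtain ⟨k, hk⟩ : ∃ k, 0 < μ ε k := by
      by_contra h
      push_neg at h
      have : ∀ k ∈ (univ : Finset (Fin N)), μ ε k = 0 :=
        fun k _ => le_antisymm (h k) (hμnn k)
      rw [Finset.sum_congr rfl this] at hμ1; simp at hμ1
    calc (0:ℝ) < μ ε k * Sr ε k := mul_pos hk (hSpos ε hε k)
      _ ≤ C ε := Finset.single_le_sum
          (fun i _ => mul_nonneg (hμnn i) (hSpos ε hε i).le) (Finset.mem_univ k)
  -- skeleton stationary distribution at scale ε
  set ν : ℝ → Fin N → ℝ := fun ε i => μ ε i * Sr ε i / C ε with hνdef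
  have hνnn : ∀ ε > (0:ℝ), ∀ i, 0 ≤ ν ε i := by
    intro ε hε i
    exact div_nonneg (mul_nonneg ((hμ ε hε).1 i) (hSpos ε hε i).le) (hCpos ε hε).le
  have hνsum : ∀ ε > (0:ℝ), ∑ i, ν ε i = 1 := by
    intro ε hε
    simp only [hνdef]
    rw [← Finset.sum_div]
    exact div_self (hCpos ε hε).ne'
  have hνle : ∀ ε > (0:ℝ), ∀ i, ν ε i ≤ 1 := by
    intro ε hε i
    rw [← hνsum ε hε]
    exact Finset.single_le_sum (fun k _ => hνnn ε hε k) (Finset.mem_univ i)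
  have hνstat : ∀ ε > (0:ℝ), ∀ j,
      ∑ i ∈ Finset.univ.erase j, ν ε i * (q ε i j / Sr ε i) = ν ε j := by
    intro ε hε j
    have h1 : ∀ i ∈ Finset.univ.erase j,
        ν ε i * (q ε i j / Sr ε i) = μ ε i * q ε i j / C ε := by
      intro i _
      simp only [hνdef]
      field_simp [(hSpos ε hε i).ne', (hCpos ε hε).ne']
    rw [Finset.sum_congr rfl h1, ← Finset.sum_div, (hμ ε hε).2.2 j]
  -- nonnegativity of P
  have hPnn : ∀ i j, 0 ≤ P i j := by
    intro i j
    rcases eq_or_ne i j with h | h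
    · rw [h, hPdiag]
    · refine ge_of_tendsto (hP i j h) ?_
      filter_upwards [hevpos] with ε hε
      exact div_nonneg (hpos ε hε i j h).le (hSpos ε hε i).le
  -- the row sums of P are 1
  have hProw : ∀ i, ∑ j ∈ Finset.univ.erase i, P i j = 1 := by
    intro i
    have h1 : Tendsto (fun ε => ∑ j ∈ Finset.univ.erase i, q ε i j / Sr ε i)
        (𝓝[>] (0:ℝ)) (𝓝 (∑ j ∈ Finset.univ.erase i, P i j)) :=
      tendsto_finset_sum _ (fun j hj => hP i j (Finset.ne_of_mem_erase hj).symm)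
    have h2 : Tendsto (fun ε => ∑ j ∈ Finset.univ.erase i, q ε i j / Sr ε i)
        (𝓝[>] (0:ℝ)) (𝓝 1) := by
      refine Tendsto.congr' ?_ tendsto_const_nhds
      filter_upwards [hevpos] with ε hε
      rw [← Finset.sum_div, div_self (hSpos ε hε i).ne']
    exact tendsto_nhds_unique h1 h2
  have hlampos : ∀ i, 0 < lam i := posOfStat P hPnn hirr lam hlamnn hlam1 hlamstat
  -- convergence of ν to lam
  have hνtend : Tendsto ν (𝓝[>] (0:ℝ)) (𝓝 lam) := by
    apply tendsto_of_subseq_tendsto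
    intro u hu
    obtain ⟨n0, hn0⟩ : ∃ n0 : ℕ, ∀ n ≥ n0, 0 < u n := by
      have := hu.eventually hevpos
      rw [eventually_atTop] at this
      exact this
    set u' : ℕ → ℝ := fun n => u (n + n0) with hu'def
    have hu' : Tendsto u' atTop (𝓝[>] (0:ℝ)) := hu.comp (tendsto_add_atTop_nat n0)
    have hu'pos : ∀ n, 0 < u' n := fun n => hn0 _ (Nat.le_add_left n0 n)
    have hmem : ∀ n, ν (u' n) ∈ Set.Icc (0 : Fin N → ℝ) 1 := by
      intro n
      refine Set.mem_Icc.2 ⟨?_, ?_⟩ <;> rw [Pi.le_def] <;> intro i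
      · exact hνnn _ (hu'pos n) i
      · exact hνle _ (hu'pos n) i
    obtain ⟨x, hxmem, φ, hφmono, hφtend⟩ := isCompact_Icc.tendsto_subseq hmem
    set w : ℕ → ℝ := fun n => u' (φ n) with hwdef
    have hw : Tendsto w atTop (𝓝[>] (0:ℝ)) := hu'.comp hφmono.tendsto_atTop
    have hwpos : ∀ n, 0 < w n := fun n => hu'pos (φ n)
    have hcomp : ∀ i, Tendsto (fun n => ν (w n) i) atTop (𝓝 (x i)) :=
      fun i => tendsto_pi_nhds.1 hφtend i
    -- x is a stationary distribution of P
    have hxnn : ∀ i, 0 ≤ x i := fun i => (Set.mem_Icc.1 hxmem).1 i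
    have hx1 : ∑ i, x i = 1 := by
      have h1 : Tendsto (fun n => ∑ i, ν (w n) i) atTop (𝓝 (∑ i, x i)) :=
        tendsto_finset_sum _ (fun i _ => hcomp i)
      have h2 : Tendsto (fun n => ∑ i, ν (w n) i) atTop (𝓝 1) := by
        refine Tendsto.congr (fun n => (hνsum _ (hwpos n)).symm) tendsto_const_nhds
      exact tendsto_nhds_unique h1 h2
    have hxs : ∀ j, ∑ i, x i * P i j = x j := by
      intro j
      have h1 : Tendsto (fun n => ∑ i ∈ Finset.univ.erase j, ν (w n) i * (q (w n) i j / Sr (w n) i))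
          atTop (𝓝 (∑ i ∈ Finset.univ.erase j, x i * P i j)) := by
        refine tendsto_finset_sum _ (fun i hi => ?_)
        exact (hcomp i).mul ((hP i j (Finset.ne_of_mem_erase hi)).comp hw)
      have h2 : Tendsto (fun n => ∑ i ∈ Finset.univ.erase j, ν (w n) i * (q (w n) i j / Sr (w n) i))
          atTop (𝓝 (x j)) := by
        refine Tendsto.congr (fun n => (hνstat _ (hwpos n) j).symm) (hcomp j)
      have h3 := tendsto_nhds_unique h1 h2
      rw [← h3]
      rw [← Finset.sum_erase_add _ _ (Finset.mem_univ j), hPdiag j]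
      ring
    have hxl : x = lam := uniqueStat P hPnn hirr lam x hlamnn hlam1 hlamstat hxnn hx1 hxs
    exact ⟨fun n => φ n + n0, hxl ▸ hφtend⟩
  have hνitend : ∀ i, Tendsto (fun ε => ν ε i) (𝓝[>] (0:ℝ)) (𝓝 (lam i)) :=
    fun i => tendsto_pi_nhds.1 hνtend i
  -- ratio limits for row sums
  have hk' : ∀ i : Fin N, ∃ k', k' ≠ i ∧ 0 < P i k' := by
    intro i
    by_contra h
    push_neg at h
    have : ∀ k ∈ Finset.univ.erase i, P i k = 0 := fun k hk =>
      le_antisymm (h k (Finset.ne_of_mem_erase hk)) (hPnn i k)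
    have := hProw i
    rw [Finset.sum_congr rfl ‹∀ k ∈ Finset.univ.erase i, P i k = 0›] at this
    simp at this
  have hR : ∀ i j : Fin N, ∃ R : ENNReal,
      Tendsto (fun ε => ENNReal.ofReal (Sr ε j / Sr ε i)) (𝓝[>] (0:ℝ)) (𝓝 R) := by
    intro i j
    obtain ⟨k', hk'i, hk'pos⟩ := hk' i
    have hterm : ∀ k : Fin N, ∃ L : ENNReal, k ≠ j →
        Tendsto (fun ε => ENNReal.ofReal (q ε j k / Sr ε i)) (𝓝[>] (0:ℝ)) (𝓝 L) := by
      intro k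
      rcases eq_or_ne k j with h | h
      · exact ⟨0, fun hc => absurd h hc⟩
      obtain ⟨L, hL⟩ := hAR j k i k' (Ne.symm h) (Ne.symm hk'i)
      refine ⟨L * ENNReal.ofReal (P i k'), fun _ => ?_⟩
      have hmul : Tendsto (fun ε => ENNReal.ofReal (q ε j k / q ε i k') *
          ENNReal.ofReal (q ε i k' / Sr ε i)) (𝓝[>] (0:ℝ))
          (𝓝 (L * ENNReal.ofReal (P i k'))) := by
        refine ENNReal.Tendsto.mul hL (Or.inr ENNReal.ofReal_ne_top)
          (ENNReal.tendsto_ofReal (hP i k' (Ne.symm hk'i))) ?_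
        exact Or.inl (ENNReal.ofReal_pos.2 hk'pos).ne'
      refine Tendsto.congr' ?_ hmul
      filter_upwards [hevpos] with ε hε
      rw [← ENNReal.ofReal_mul (div_nonneg (hpos ε hε j k (Ne.symm h)).le
        (hpos ε hε i k' (Ne.symm hk'i)).le)]
      rw [div_mul_div_cancel₀ (hpos ε hε i k' (Ne.symm hk'i)).ne']
    choose L hL using hterm
    refine ⟨∑ k ∈ Finset.univ.erase j, L k, ?_⟩
    have hsum : Tendsto (fun ε => ∑ k ∈ Finset.univ.erase j, ENNReal.ofReal (q ε j k / Sr ε i))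
        (𝓝[>] (0:ℝ)) (𝓝 (∑ k ∈ Finset.univ.erase j, L k)) :=
      tendsto_finset_sum _ (fun k hk => hL k (Finset.ne_of_mem_erase hk))
    refine Tendsto.congr' ?_ hsum
    filter_upwards [hevpos] with ε hε
    rw [← ENNReal.ofReal_sum_of_nonneg (fun k hk => div_nonneg
      (hpos ε hε j k (Finset.ne_of_mem_erase hk).symm).le (hSpos ε hε i).le)]
    exact congrArg ENNReal.ofReal (Finset.sum_div _ _ _).symm
  choose R hRt using hR
  have hRjj : ∀ j, R j j = 1 := by
    intro j
    refine tendsto_nhds_unique (hRt j j) ?_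
    have hone : Tendsto (fun _ : ℝ => (1:ENNReal)) (𝓝[>] (0:ℝ)) (𝓝 1) := tendsto_const_nhds
    refine Tendsto.congr' ?_ hone
    filter_upwards [hevpos] with ε hε
    rw [div_self (hSpos ε hε j).ne', ENNReal.ofReal_one]
  set E : Fin N → ENNReal := fun j => ∑ i, ENNReal.ofReal (lam i) * R i j with hEdef
  have hE0 : ∀ j, E j ≠ 0 := by
    intro j
    have h1 : ENNReal.ofReal (lam j) * R j j ≤ E j :=
      Finset.single_le_sum (f := fun i => ENNReal.ofReal (lam i) * R i j)
        (fun i _ => zero_le) (Finset.mem_univ j)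
    rw [hRjj j, mul_one] at h1
    intro h
    rw [h] at h1
    exact absurd (le_antisymm h1 zero_le) (ENNReal.ofReal_pos.2 (hlampos j)).ne'
  have hDtend : ∀ j, Tendsto (fun ε => ENNReal.ofReal (∑ i, ν ε i * (Sr ε j / Sr ε i)))
      (𝓝[>] (0:ℝ)) (𝓝 (E j)) := by
    intro j
    have h1 : Tendsto (fun ε => ∑ i, ENNReal.ofReal (ν ε i) * ENNReal.ofReal (Sr ε j / Sr ε i))
        (𝓝[>] (0:ℝ)) (𝓝 (E j)) := by
      refine tendsto_finset_sum _ (fun i _ => ?_)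
      exact ENNReal.Tendsto.mul (ENNReal.tendsto_ofReal (hνitend i))
        (Or.inl (ENNReal.ofReal_pos.2 (hlampos i)).ne') (hRt i j)
        (Or.inr ENNReal.ofReal_ne_top)
    refine Tendsto.congr' ?_ h1
    filter_upwards [hevpos] with ε hε
    rw [ENNReal.ofReal_sum_of_nonneg (fun i _ => mul_nonneg (hνnn ε hε i)
      (div_nonneg (hSpos ε hε j).le (hSpos ε hε i).le))]
    exact Finset.sum_congr rfl fun i _ => (ENNReal.ofReal_mul (hνnn ε hε i)).symm
  have hden : ∀ ε > (0:ℝ), ∀ j, ∑ i, ν ε i * (Sr ε j / Sr ε i) = Sr ε j / C ε := by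
    intro ε hε j
    have h1 : ∀ i ∈ (univ : Finset (Fin N)),
        ν ε i * (Sr ε j / Sr ε i) = μ ε i * (Sr ε j / C ε) := by
      intro i _
      simp only [hνdef]
      field_simp [(hSpos ε hε i).ne', (hCpos ε hε).ne']
    rw [Finset.sum_congr rfl h1, ← Finset.sum_mul, (hμ ε hε).2.1, one_mul]
  have hμeq : ∀ ε > (0:ℝ), ∀ j, μ ε j = ν ε j / (∑ i, ν ε i * (Sr ε j / Sr ε i)) := by
    intro ε hε j
    rw [hden ε hε j]
    simp only [hνdef]
    field_simp [(hSpos ε hε j).ne', (hCpos ε hε).ne']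
  have hμtendE : ∀ j, Tendsto (fun ε => ENNReal.ofReal (μ ε j)) (𝓝[>] (0:ℝ))
      (𝓝 (ENNReal.ofReal (lam j) / E j)) := by
    intro j
    have h1 := ENNReal.Tendsto.div (ENNReal.tendsto_ofReal (hνitend j))
      (Or.inl (ENNReal.ofReal_pos.2 (hlampos j)).ne') (hDtend j)
      (Or.inr ENNReal.ofReal_ne_top)
    refine Tendsto.congr' ?_ h1
    filter_upwards [hevpos] with ε hε
    have hdpos : 0 < ∑ i, ν ε i * (Sr ε j / Sr ε i) := by
      rw [hden ε hε j]
      exact div_pos (hSpos ε hε j) (hCpos ε hε)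
    rw [← ENNReal.ofReal_div_of_pos hdpos, ← hμeq ε hε j]
  set M : Fin N → ENNReal := fun j => ENNReal.ofReal (lam j) / E j with hMdef
  have hMne : ∀ j, M j ≠ ⊤ := fun j => (ENNReal.div_lt_top ENNReal.ofReal_ne_top (hE0 j)).ne
  have htend : ∀ j, Tendsto (fun ε => μ ε j) (𝓝[>] (0:ℝ)) (𝓝 ((M j).toReal)) := by
    intro j
    have h1 := (ENNReal.tendsto_toReal (hMne j)).comp (hμtendE j)
    refine Tendsto.congr' ?_ h1
    filter_upwards [hevpos] with ε hε
    simp only [Function.comp_apply]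
    exact ENNReal.toReal_ofReal ((hμ ε hε).1 j)
  refine ⟨fun j => (M j).toReal, fun i => ⟨Set.mem_Icc.2 ⟨?_, ?_⟩, htend i⟩, ?_⟩
  · refine ge_of_tendsto (htend i) ?_
    filter_upwards [hevpos] with ε hε
    exact (hμ ε hε).1 i
  · refine le_of_tendsto (htend i) ?_
    filter_upwards [hevpos] with ε hε
    rw [← (hμ ε hε).2.1]
    exact Finset.single_le_sum (fun k _ => (hμ ε hε).1 k) (Finset.mem_univ i)
  · have h1 : Tendsto (fun ε => ∑ j, μ ε j) (𝓝[>] (0:ℝ)) (𝓝 (∑ j, (M j).toReal)) :=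
      tendsto_finset_sum _ (fun j _ => htend j)
    have h2 : Tendsto (fun ε => ∑ j, μ ε j) (𝓝[>] (0:ℝ)) (𝓝 1) := by
      refine Tendsto.congr' ?_ tendsto_const_nhds
      filter_upwards [hevpos] with ε hε
      exact ((hμ ε hε).2.1).symm
    exact tendsto_nhds_unique h1 h2
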